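/- For every integer n > 0, e_2p(n) = (1/2) ( n^2 * p(n) - Σ_{k=1}^{n} σ_2(k) * p(n-k) ). -/

import Mathlib

open Finset

/-- `e_j p(n)`, the sum of the `j`-th elementary symmetric polynomial evaluated at the
parts over all partitions of `n`. -/
def ejp (j n : ℕ) : ℕ := ∑ π : Nat.Partition n, π.parts.esymm j

/-- `σ_j(n)`, the sum of the `j`-th powers of the divisors of `n`. -/
def sigmaPow (j n : ℕ) : ℕ := ∑ d ∈ n.divisors, d ^ j

lemma msum_le_of_le {s t : Multiset ℕ} (h : s ≤ t) : s.sum ≤ t.sum := by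
  have h2 : (t - s) + s = t := tsub_add_cancel_of_le h
  calc s.sum ≤ (t - s).sum + s.sum := Nat.le_add_left _ _
    _ = t.sum := by rw [← Multiset.sum_add, h2]

lemma sq_sum_multiset (s : Multiset ℕ) :
    s.sum ^ 2 = 2 * s.esymm 2 + (s.map (· ^ 2)).sum := by
  induction s using Multiset.induction with
  | empty => simp [Multiset.esymm, Multiset.powersetCard_eq_empty 2 (s := (0 : Multiset ℕ)) (by simp)]
  | cons a s ih =>
      have h2 : (a ::ₘ s).esymm 2 = a * s.sum + s.esymm 2 := by
        simp only [Multiset.esymm, Multiset.powersetCard_cons, Multiset.map_add,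
          Multiset.sum_add, Multiset.map_map]
        rw [Multiset.powersetCard_one]
        have : ((s.map (fun x => ({x} : Multiset ℕ))).map
            (Multiset.prod ∘ (a ::ₘ ·))).sum = a * s.sum := by
          rw [Multiset.map_map]
          have : (Multiset.prod ∘ (a ::ₘ ·)) ∘ (fun x => ({x} : Multiset ℕ))
              = fun x => a * x := by
            funext x; simp
          rw [this]
          simpa using Multiset.sum_map_mul_left (s := s) (a := a) (f := id)
        rw [this]; ring
      rw [h2]
      simp only [Multiset.sum_cons, Multiset.map_cons]
      ring_nf
      ring_nf at ih
      omega

/-- The number of partitions of `n` with at least `j` copies of `d` equals `p (n - j*d)`. -/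
lemma card_filter_count (n d j : ℕ) (hd : 0 < d) (hj : 0 < j) (hjd : j * d ≤ n) :
    (Finset.univ.filter (fun π : Nat.Partition n => j ≤ π.parts.count d)).card
      = Fintype.card (Nat.Partition (n - j * d)) := by
  let addMap : Nat.Partition (n - j * d) → Nat.Partition n := fun μ =>
    ⟨μ.parts + Multiset.replicate j d,
      by
        intro i hi
        rcases Multiset.mem_add.mp hi with h | h
        · exact μ.parts_pos h
        · rw [Multiset.eq_of_mem_replicate h]; exact hd,
      by
        rw [Multiset.sum_add, μ.parts_sum, Multiset.sum_replicate, smul_eq_mul]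
        omega⟩
  have haddMap : ∀ μ : Nat.Partition (n - j * d),
      (addMap μ).parts = μ.parts + Multiset.replicate j d := fun μ => rfl
  rw [Fintype.card, eq_comm]
  apply Finset.card_bij (fun μ _ => addMap μ)
  · intro μ _
    simp only [Finset.mem_filter, Finset.mem_univ, true_and, haddMap]
    simp [Multiset.count_replicate]
  · intro μ _ ν _ h
    have h2 : μ.parts = ν.parts := by
      have := congrArg Nat.Partition.parts h
      rw [haddMap, haddMap] at this
      exact add_right_cancel this
    cases μ; cases ν; simp_all
  · intro π hπ
    simp only [Finset.mem_filter, Finset.mem_univ, true_and] at hπ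
    have hle : Multiset.replicate j d ≤ π.parts :=
      (Multiset.le_count_iff_replicate_le).mp hπ
    have hsum : (π.parts - Multiset.replicate j d).sum = n - j * d := by
      have heq := tsub_add_cancel_of_le hle
      have hs : (π.parts - Multiset.replicate j d).sum + (Multiset.replicate j d).sum
          = π.parts.sum := by rw [← Multiset.sum_add, heq]
      rw [Multiset.sum_replicate, smul_eq_mul, π.parts_sum] at hs
      omega
    refine ⟨⟨π.parts - Multiset.replicate j d, ?_, hsum⟩, Finset.mem_univ _, ?_⟩
    · intro i hi
      exact π.parts_pos (Multiset.mem_of_le (tsub_le_self) hi)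
    · apply Nat.Partition.ext
      rw [haddMap]
      simp [tsub_add_cancel_of_le hle]

lemma sum_count_eq (n d : ℕ) (hd : 0 < d) :
    ∑ π : Nat.Partition n, π.parts.count d
      = ∑ j ∈ Finset.Icc 1 n,
          (if j * d ≤ n then Fintype.card (Nat.Partition (n - j*d)) else 0) := by
  have key : ∀ π : Nat.Partition n, π.parts.count d
      = ∑ j ∈ Finset.Icc 1 n, (if j ≤ π.parts.count d then 1 else 0) := by
    intro π
    have hcn : π.parts.count d ≤ n := by
      have hle : Multiset.replicate (π.parts.count d) d ≤ π.parts :=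
        (Multiset.le_count_iff_replicate_le).mp le_rfl
      have h := msum_le_of_le hle
      rw [Multiset.sum_replicate, smul_eq_mul, π.parts_sum] at h
      calc π.parts.count d ≤ π.parts.count d * d := Nat.le_mul_of_pos_right _ hd
        _ ≤ n := h
    rw [← Finset.sum_filter]
    have : Finset.filter (fun j => j ≤ π.parts.count d) (Finset.Icc 1 n)
        = Finset.Icc 1 (π.parts.count d) := by
      ext j; simp only [Finset.mem_filter, Finset.mem_Icc]; omega
    simp [this]
  rw [Finset.sum_congr rfl (fun π _ => key π), Finset.sum_comm]
  apply Finset.sum_congr rfl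
  intro j hj
  have hj1 : 1 ≤ j := (Finset.mem_Icc.mp hj).1
  rw [← Finset.sum_filter]
  simp only [Finset.sum_const, smul_eq_mul, mul_one]
  by_cases h : j * d ≤ n
  · rw [if_pos h, card_filter_count n d j hd hj1 h]
  · rw [if_neg h]
    convert Finset.card_empty
    rw [Finset.filter_eq_empty_iff]
    intro π _
    intro hcount
    have hle : Multiset.replicate j d ≤ π.parts :=
      (Multiset.le_count_iff_replicate_le).mp hcount
    have h2 := msum_le_of_le hle
    rw [Multiset.sum_replicate, smul_eq_mul, π.parts_sum] at h2
    omega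

lemma sum_sq_parts (n : ℕ) :
    ∑ π : Nat.Partition n, (π.parts.map (· ^ 2)).sum
      = ∑ k ∈ Finset.Icc 1 n, sigmaPow 2 k * Fintype.card (Nat.Partition (n - k)) := by
  have step1 : ∀ π : Nat.Partition n, (π.parts.map (· ^ 2)).sum
      = ∑ d ∈ Finset.Icc 1 n, π.parts.count d * d ^ 2 := by
    intro π
    rw [Finset.sum_multiset_map_count]
    have hsub : π.parts.toFinset ⊆ Finset.Icc 1 n := by
      intro d hd
      have hdm : d ∈ π.parts := Multiset.mem_toFinset.mp hd
      have h1 : 0 < d := π.parts_pos hdm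
      have h2 : d ≤ n := by
        have := Multiset.single_le_sum (fun x _ => Nat.zero_le x) d hdm
        rwa [π.parts_sum] at this
      exact Finset.mem_Icc.mpr ⟨h1, h2⟩
    rw [Finset.sum_subset hsub (fun d _ hd => by
      simp [Multiset.count_eq_zero_of_notMem (fun h => hd (Multiset.mem_toFinset.mpr h))])]
    simp [smul_eq_mul]
  rw [Finset.sum_congr rfl (fun π _ => step1 π), Finset.sum_comm]
  have step2 : ∀ d ∈ Finset.Icc 1 n,
      ∑ π : Nat.Partition n, π.parts.count d * d ^ 2
        = ∑ j ∈ Finset.Icc 1 n,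
            (if j * d ≤ n then Fintype.card (Nat.Partition (n - j*d)) else 0) * d ^ 2 := by
    intro d hd
    rw [← Finset.sum_mul, ← Finset.sum_mul, sum_count_eq n d (Finset.mem_Icc.mp hd).1]
  rw [Finset.sum_congr rfl step2]
  -- rewrite the RHS
  have hsig : ∀ k, sigmaPow 2 k = ∑ p ∈ k.divisorsAntidiagonal, p.1 ^ 2 := by
    intro k
    rw [sigmaPow, ← Nat.sum_divisorsAntidiagonal (fun d _ => d ^ 2)]
  have hanti : ∀ k ∈ Finset.Icc 1 n, Nat.divisorsAntidiagonal k
      = (Finset.Icc 1 n ×ˢ Finset.Icc 1 n).filter (fun p => p.1 * p.2 = k) := by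
    intro k hk
    obtain ⟨hk1, hk2⟩ := Finset.mem_Icc.mp hk
    ext p
    simp only [Nat.mem_divisorsAntidiagonal, Finset.mem_filter, Finset.mem_product,
      Finset.mem_Icc]
    constructor
    · rintro ⟨h, hne⟩
      have h1 : 0 < p.1 := Nat.pos_of_ne_zero (fun hp => by rw [hp, zero_mul] at h; omega)
      have h2 : 0 < p.2 := Nat.pos_of_ne_zero (fun hp => by rw [hp, mul_zero] at h; omega)
      refine ⟨⟨⟨h1, ?_⟩, ⟨h2, ?_⟩⟩, h⟩
      · calc p.1 ≤ p.1 * p.2 := Nat.le_mul_of_pos_right _ h2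
          _ = k := h
          _ ≤ n := hk2
      · calc p.2 ≤ p.1 * p.2 := Nat.le_mul_of_pos_left _ h1
          _ = k := h
          _ ≤ n := hk2
    · rintro ⟨_, h⟩; exact ⟨h, by omega⟩
  have hrhs : ∑ k ∈ Finset.Icc 1 n, sigmaPow 2 k * Fintype.card (Nat.Partition (n - k))
      = ∑ d ∈ Finset.Icc 1 n, ∑ j ∈ Finset.Icc 1 n,
          (if j * d ≤ n then Fintype.card (Nat.Partition (n - j * d)) else 0) * d ^ 2 := by
    calc ∑ k ∈ Finset.Icc 1 n, sigmaPow 2 k * Fintype.card (Nat.Partition (n - k))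
        = ∑ k ∈ Finset.Icc 1 n, ∑ p ∈ Finset.Icc 1 n ×ˢ Finset.Icc 1 n,
            (if p.1 * p.2 = k then p.1 ^ 2 * Fintype.card (Nat.Partition (n - k)) else 0) := by
          refine Finset.sum_congr rfl (fun k hk => ?_)
          rw [hsig, Finset.sum_mul, hanti k hk, Finset.sum_filter]
      _ = ∑ p ∈ Finset.Icc 1 n ×ˢ Finset.Icc 1 n, ∑ k ∈ Finset.Icc 1 n,
            (if p.1 * p.2 = k then p.1 ^ 2 * Fintype.card (Nat.Partition (n - k)) else 0) :=
          Finset.sum_comm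
      _ = ∑ p ∈ Finset.Icc 1 n ×ˢ Finset.Icc 1 n,
            (if p.1 * p.2 ∈ Finset.Icc 1 n
              then p.1 ^ 2 * Fintype.card (Nat.Partition (n - p.1 * p.2)) else 0) := by
          refine Finset.sum_congr rfl (fun p _ => ?_)
          rw [Finset.sum_ite_eq (Finset.Icc 1 n) (p.1 * p.2)
            (fun k => p.1 ^ 2 * Fintype.card (Nat.Partition (n - k)))]
      _ = ∑ d ∈ Finset.Icc 1 n, ∑ j ∈ Finset.Icc 1 n,
            (if j * d ≤ n then Fintype.card (Nat.Partition (n - j * d)) else 0) * d ^ 2 := by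
          rw [Finset.sum_product]
          refine Finset.sum_congr rfl (fun d hd => Finset.sum_congr rfl (fun j hj => ?_))
          obtain ⟨hd1, _⟩ := Finset.mem_Icc.mp hd
          obtain ⟨hj1, _⟩ := Finset.mem_Icc.mp hj
          have hmem : d * j ∈ Finset.Icc 1 n ↔ j * d ≤ n := by
            rw [Finset.mem_Icc, mul_comm]
            exact ⟨fun h => h.2, fun h => ⟨Nat.one_le_iff_ne_zero.mpr (by positivity), h⟩⟩
          by_cases h : j * d ≤ n
          · rw [if_pos h, if_pos (hmem.mpr h), mul_comm d j, mul_comm]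
          · rw [if_neg h, if_neg (fun hc => h (hmem.mp hc)), zero_mul]
  rw [hrhs]

theorem e2p_formula (n : ℕ) (hn : 0 < n) :
    (ejp 2 n : ℚ) =
      (1 / 2) * ((n : ℚ) ^ 2 * (Fintype.card (Nat.Partition n) : ℚ) -
        ∑ k ∈ Finset.Icc 1 n,
          (sigmaPow 2 k : ℚ) * (Fintype.card (Nat.Partition (n - k)) : ℚ)) := by
  have key : (n ^ 2) * Fintype.card (Nat.Partition n)
      = 2 * ejp 2 n
        + ∑ k ∈ Finset.Icc 1 n, sigmaPow 2 k * Fintype.card (Nat.Partition (n - k)) := by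
    rw [← sum_sq_parts n, ejp, Finset.mul_sum, ← Finset.sum_add_distrib]
    rw [Fintype.card, Finset.card_eq_sum_ones, Finset.mul_sum]
    apply Finset.sum_congr rfl
    intro π _
    rw [mul_one]
    have h := sq_sum_multiset π.parts
    rwa [π.parts_sum] at h
  have hc := congrArg (Nat.cast (R := ℚ)) key
  push_cast at hc
  linarith
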